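/- Under hypothesis (H1), if φ_{A,k} is proper then A = bd A - [0,∞)·k and dom φ_{A,k} = ℝk + bd A. -/

import Mathlib

open Set Pointwise

noncomputable def phiF {Y : Type*} [AddCommGroup Y] [Module ℝ Y] (A : Set Y) (k : Y) (y : Y) : EReal :=
  sInf ((fun t : ℝ => (t : EReal)) '' {t : ℝ | y - t • k ∈ A})

def recCone {Y : Type*} [AddCommGroup Y] [Module ℝ Y] (A : Set Y) : Set Y :=
  {u | ∀ a ∈ A, ∀ t : ℝ, 0 ≤ t → a + t • u ∈ A}

def algInterior {Y : Type*} [AddCommGroup Y] [Module ℝ Y] (C : Set Y) : Set Y :=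
  {x ∈ C | ∀ y : Y, ∃ ε : ℝ, 0 < ε ∧ ∀ t : ℝ, 0 ≤ t → t ≤ ε → x + t • y ∈ C}

lemma key_lemma {Y : Type*} [AddCommGroup Y] [Module ℝ Y] [TopologicalSpace Y]
    [IsTopologicalAddGroup Y] [ContinuousSMul ℝ Y]
    (A : Set Y) (hAc : IsClosed A) (k : Y)
    (hrec : ∀ a ∈ A, ∀ t : ℝ, 0 ≤ t → a - t • k ∈ A)
    (hbot : ∀ y : Y, phiF A k y ≠ ⊥)
    {a : Y} (ha : a ∈ A) :
    ∃ b ∈ frontier A, ∃ t : ℝ, 0 ≤ t ∧ a = b - t • k := by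
  set S : Set ℝ := {t | a - t • k ∈ A} with hSdef
  have h0 : (0 : ℝ) ∈ S := by simpa [S] using ha
  have hSne : S.Nonempty := ⟨0, h0⟩
  have hbdd : BddBelow S := by
    by_contra hb
    apply hbot a
    rw [phiF, sInf_eq_bot]
    intro x hx
    obtain ⟨z, hz1, hz2⟩ := exists_between hx
    have hzt : z ≠ ⊤ := by
      intro h; rw [h] at hz2; exact (not_top_lt hz2)
    have hzb : z ≠ ⊥ := hz1.ne'
    lift z to ℝ using ⟨hzt, hzb⟩
    obtain ⟨t, htS, htz⟩ := (not_bddBelow_iff.mp hb) z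
    exact ⟨(t : EReal), ⟨t, htS, rfl⟩, lt_trans (by exact_mod_cast htz) hz2⟩
  have hScl : IsClosed S := by
    have hcont : Continuous fun t : ℝ => a - t • k := by continuity
    exact hAc.preimage hcont
  set s : ℝ := sInf S with hs
  have hsS : s ∈ S := hScl.csInf_mem hSne hbdd
  have hs0 : s ≤ 0 := csInf_le hbdd h0
  set b : Y := a - s • k with hb
  have hbA : b ∈ A := hsS
  have hbint : b ∉ interior A := by
    intro hbin
    have hcont : Continuous fun t : ℝ => a - t • k := by continuity
    have hopen : IsOpen ((fun t : ℝ => a - t • k) ⁻¹' interior A) :=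
      isOpen_interior.preimage hcont
    have hsmem : s ∈ (fun t : ℝ => a - t • k) ⁻¹' interior A := hbin
    obtain ⟨ε, hε, hball⟩ := Metric.isOpen_iff.mp hopen s hsmem
    have hmem : s - ε / 2 ∈ Metric.ball s ε := by
      simp [Real.dist_eq, abs_of_nonneg, abs_of_pos]
      rw [abs_of_pos (by linarith)]
      linarith
    have h1 : a - (s - ε / 2) • k ∈ interior A := hball hmem
    have h2 : a - (s - ε / 2) • k ∈ A := interior_subset h1
    have : s - ε / 2 ∈ S := h2
    have := csInf_le hbdd this
    linarith
  refine ⟨b, ?_, -s, by linarith, ?_⟩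
  · rw [hAc.frontier_eq]
    exact ⟨hbA, hbint⟩
  · simp [hb, neg_smul]

theorem stmt_7 {Y : Type*} [AddCommGroup Y] [Module ℝ Y] [TopologicalSpace Y]
    [IsTopologicalAddGroup Y] [ContinuousSMul ℝ Y]
    (A : Set Y) (hAc : IsClosed A) (hAne : A.Nonempty) (hAp : A ≠ Set.univ)
    (k : Y) (hk : k ≠ 0) (hrec : ∀ a ∈ A, ∀ t : ℝ, 0 ≤ t → a - t • k ∈ A)
    (hproper : (∃ y : Y, phiF A k y ≠ ⊤) ∧ ∀ y : Y, phiF A k y ≠ ⊥) :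
    A = {y | ∃ b ∈ frontier A, ∃ t : ℝ, 0 ≤ t ∧ y = b - t • k} ∧
      {y | ∃ t : ℝ, y - t • k ∈ A} = {y | ∃ b ∈ frontier A, ∃ t : ℝ, y = b + t • k} := by
  have hfA : frontier A ⊆ A := by
    rw [hAc.frontier_eq]; exact Set.diff_subset
  constructor
  · ext y
    constructor
    · intro hy
      exact key_lemma A hAc k hrec hproper.2 hy
    · rintro ⟨b, hb, t, ht, rfl⟩
      exact hrec b (hfA hb) t ht
  · ext y
    constructor
    · rintro ⟨t, ht⟩
      obtain ⟨b, hb, s, hs, heq⟩ := key_lemma A hAc k hrec hproper.2 ht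
      refine ⟨b, hb, t - s, ?_⟩
      have : y = (y - t • k) + t • k := by abel
      rw [this, heq, sub_smul]
      abel
    · rintro ⟨b, hb, t, rfl⟩
      exact ⟨t, by simpa using hfA hb⟩
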